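/- Let ℓ ∈ {ℓ_log, ℓ_lin}, let f be the SCL objective, and let L_f be its strong smoothness parameter. (i) If β* is an α-stationary point of the SCL problem for some α > 0, then β* is a local minimizer. (ii) If moreover ‖β₁*‖₀ < s₁ and ‖β₂*‖₀ < s₂, then β* is a global minimizer. (iii) Conversely, every global minimizer of the SCL problem is an α-stationary point for every α with 0 < α < 1/L_f. -/

import Mathlib

open Matrix Filter Topology Finset
open scoped RealInnerProductSpace

noncomputable section SCL

/-- the zero "norm" of a vector: the number of its nonzero entries. -/
def zeroNorm {p : ℕ} (x : EuclideanSpace ℝ (Fin p)) : ℕ :=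
  {i | x i ≠ 0}.ncard

/-- the `k`-th largest entry in magnitude (`1`-indexed; junk value `0` if `k = 0` or `k > p`). -/
def kthLargestAbs {p : ℕ} (x : EuclideanSpace ℝ (Fin p)) (k : ℕ) : ℝ :=
  ((Finset.univ.val.map fun i => |x i|).sort (· ≤ ·)).getD (p - k) 0

/-- the (set-valued) Euclidean projection onto a set `S`. -/
def projSet {m : ℕ} (S : Set (EuclideanSpace ℝ (Fin m))) (w : EuclideanSpace ℝ (Fin m)) :
    Set (EuclideanSpace ℝ (Fin m)) :=
  {u | u ∈ S ∧ ∀ v ∈ S, ‖u - w‖ ≤ ‖v - w‖}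

/-- the first block `β₁` of `β = (β₁; β₂)`. -/
def part1 {p₁ p₂ : ℕ} (β : EuclideanSpace ℝ (Fin (p₁ + p₂))) : EuclideanSpace ℝ (Fin p₁) :=
  WithLp.toLp 2 (fun i => β (Fin.castAdd p₂ i))

/-- the second block `β₂` of `β = (β₁; β₂)`. -/
def part2 {p₁ p₂ : ℕ} (β : EuclideanSpace ℝ (Fin (p₁ + p₂))) : EuclideanSpace ℝ (Fin p₂) :=
  WithLp.toLp 2 (fun i => β (Fin.natAdd p₁ i))

/-- the logistic loss `ℓ_log(β; X, y)`. -/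
def ellLog {n p : ℕ} (X : Matrix (Fin n) (Fin p) ℝ) (y : Fin n → ℝ)
    (β : EuclideanSpace ℝ (Fin p)) : ℝ :=
  ∑ i, (Real.log (1 + Real.exp (X.mulVec β i)) - y i * X.mulVec β i)

/-- the linear regression loss `ℓ_lin(β; X, y)`. -/
def ellLin {n p : ℕ} (X : Matrix (Fin n) (Fin p) ℝ) (y : Fin n → ℝ)
    (β : EuclideanSpace ℝ (Fin p)) : ℝ :=
  (1 / 2) * ∑ i, (y i - X.mulVec β i) ^ 2

/-- the SCL objective `f(β₁,β₂) = (1/n) (a ℓ₁(β₁;X,y) + b ℓ₂(β₂;Z,y) + (c/2)‖Xβ₁ − Zβ₂‖²)`,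
as a function of the merged vector `β = (β₁; β₂)`. -/
def sclObj {n p₁ p₂ : ℕ}
    (ℓ₁ : Matrix (Fin n) (Fin p₁) ℝ → (Fin n → ℝ) → EuclideanSpace ℝ (Fin p₁) → ℝ)
    (ℓ₂ : Matrix (Fin n) (Fin p₂) ℝ → (Fin n → ℝ) → EuclideanSpace ℝ (Fin p₂) → ℝ)
    (X : Matrix (Fin n) (Fin p₁) ℝ) (Z : Matrix (Fin n) (Fin p₂) ℝ) (y : Fin n → ℝ)
    (a b c : ℝ) (β : EuclideanSpace ℝ (Fin (p₁ + p₂))) : ℝ :=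
  (1 / (n : ℝ)) * (a * ℓ₁ X y (part1 β) + b * ℓ₂ Z y (part2 β)
    + (c / 2) * ∑ i, (X.mulVec (part1 β) i - Z.mulVec (part2 β) i) ^ 2)

/-- the largest eigenvalue of a symmetric matrix, via the Rayleigh quotient. -/
def lambdaMax {ι : Type*} [Fintype ι] (M : Matrix ι ι ℝ) : ℝ :=
  sSup {r | ∃ v : EuclideanSpace ℝ ι, ‖v‖ = 1 ∧ r = ∑ i, v i * M.mulVec v i}

/-- the smallest eigenvalue of a symmetric matrix, via the Rayleigh quotient. -/
def lambdaMin {ι : Type*} [Fintype ι] (M : Matrix ι ι ℝ) : ℝ :=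
  sInf {r | ∃ v : EuclideanSpace ℝ ι, ‖v‖ = 1 ∧ r = ∑ i, v i * M.mulVec v i}

/-- the 2×2 block matrix `[[A, B], [C, D]]`, indexed by `Fin (p₁ + p₂)`. -/
def blockMat {p₁ p₂ : ℕ} (A : Matrix (Fin p₁) (Fin p₁) ℝ) (B : Matrix (Fin p₁) (Fin p₂) ℝ)
    (C : Matrix (Fin p₂) (Fin p₁) ℝ) (D : Matrix (Fin p₂) (Fin p₂) ℝ) :
    Matrix (Fin (p₁ + p₂)) (Fin (p₁ + p₂)) ℝ :=
  Matrix.reindex finSumFinEquiv finSumFinEquiv (Matrix.fromBlocks A B C D)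

/-- a square matrix as a continuous linear map on Euclidean space. -/
def matCLM {ι : Type*} [Fintype ι] [DecidableEq ι] (M : Matrix ι ι ℝ) :
    EuclideanSpace ℝ ι →L[ℝ] EuclideanSpace ℝ ι :=
  LinearMap.toContinuousLinearMap (Matrix.toEuclideanLin M)

/-- `A` is `s`-regular if any `s` of its columns are linearly independent. -/
def sRegular {n p : ℕ} (A : Matrix (Fin n) (Fin p) ℝ) (s : ℕ) : Prop :=
  ∀ T : Finset (Fin p), T.card = s →
    LinearIndependent ℝ (fun j : {x // x ∈ T} => Aᵀ j.1)

/-- the feasible set `Σ = Σ_{s₁}^{p₁} × Σ_{s₂}^{p₂}` of the SCL problem, in merged form. -/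
def feas (p₁ p₂ s₁ s₂ : ℕ) : Set (EuclideanSpace ℝ (Fin (p₁ + p₂))) :=
  {β | zeroNorm (part1 β) ≤ s₁ ∧ zeroNorm (part2 β) ≤ s₂}

/-- `β` is an `α`-stationary point of the SCL problem with objective `f`. -/
def alphaStat {p₁ p₂ : ℕ} (f : EuclideanSpace ℝ (Fin (p₁ + p₂)) → ℝ) (s₁ s₂ : ℕ) (α : ℝ)
    (β : EuclideanSpace ℝ (Fin (p₁ + p₂))) : Prop :=
  part1 β ∈ projSet {v | zeroNorm v ≤ s₁} (part1 β - α • part1 (gradient f β)) ∧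
  part2 β ∈ projSet {v | zeroNorm v ≤ s₂} (part2 β - α • part2 (gradient f β))

end SCL

noncomputable section Helpers

lemma norm_sq_eq' {p : ℕ} (u : EuclideanSpace ℝ (Fin p)) : ‖u‖ ^ 2 = ∑ i, (u i) ^ 2 := by
  rw [EuclideanSpace.norm_eq, Real.sq_sqrt (by positivity)]
  simp [sq_abs]

lemma inner_eq'' {p : ℕ} (u v : EuclideanSpace ℝ (Fin p)) : ⟪u, v⟫ = ∑ i, u i * v i := by
  simp [PiLp.inner_apply, RCLike.inner_apply, conj_trivial]
  exact Finset.sum_congr rfl fun i _ => mul_comm _ _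

lemma abs_coord_le {p : ℕ} (u : EuclideanSpace ℝ (Fin p)) (i : Fin p) : |u i| ≤ ‖u‖ := by
  have h1 : (u i) ^ 2 ≤ ∑ j, (u j) ^ 2 :=
    Finset.single_le_sum (f := fun j => (u j) ^ 2) (fun j _ => sq_nonneg _) (Finset.mem_univ i)
  have h2 := norm_sq_eq' u
  nlinarith [norm_nonneg u, abs_nonneg (u i), sq_abs (u i)]

/-- `zeroNorm` as a Finset card. -/
lemma zeroNorm_eq_card {p : ℕ} (x : EuclideanSpace ℝ (Fin p)) :
    zeroNorm x = (Finset.univ.filter (fun i => x i ≠ 0)).card := by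
  rw [zeroNorm, ← Set.ncard_coe_finset]
  congr 1
  ext i
  simp

/-- key stationarity lemma: components of the gradient vanish on any small superset of the
support. -/
lemma grad_zero_on {p s : ℕ} {α : ℝ} (hα : 0 < α) {β g : EuclideanSpace ℝ (Fin p)}
    (hstat : β ∈ projSet {v | zeroNorm v ≤ s} (β - α • g))
    (T : Finset (Fin p)) (hT : ∀ j, β j ≠ 0 → j ∈ T) (hcard : T.card ≤ s) :
    ∀ j ∈ T, g j = 0 := by
  classical
  set w : EuclideanSpace ℝ (Fin p) := β - α • g with hw
  set v : EuclideanSpace ℝ (Fin p) := WithLp.toLp 2 (fun j => if j ∈ T then w j else 0) with hv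
  have hvS : zeroNorm v ≤ s := by
    rw [zeroNorm_eq_card]
    refine le_trans (Finset.card_le_card ?_) hcard
    intro j hj
    simp only [Finset.mem_filter, Finset.mem_univ, true_and, hv] at hj
    by_contra hjT
    exact hj (by simp [hjT])
  have hle : ‖β - w‖ ≤ ‖v - w‖ := hstat.2 v hvS
  have hsq : ‖β - w‖ ^ 2 ≤ ‖v - w‖ ^ 2 := by
    have := norm_nonneg (β - w)
    nlinarith [norm_nonneg (v - w)]
  have e1 : ‖β - w‖ ^ 2 = ∑ j, α ^ 2 * g j ^ 2 := by
    have : β - w = α • g := by rw [hw]; abel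
    rw [this, norm_sq_eq']
    refine Finset.sum_congr rfl fun j _ => ?_
    have : (α • g) j = α * g j := rfl
    rw [this]; ring
  have e2 : ‖v - w‖ ^ 2 = ∑ j, (if j ∈ T then 0 else α ^ 2 * g j ^ 2) := by
    rw [norm_sq_eq']
    refine Finset.sum_congr rfl fun j _ => ?_
    have hsub : (v - w) j = v j - w j := rfl
    rw [hsub]
    by_cases hj : j ∈ T
    · simp [hv, hj]
    · have hβj : β j = 0 := by by_contra hne; exact hj (hT j hne)
      have hwj : w j = β j - α * g j := rfl
      simp only [hv, hj, if_false, if_neg, zero_sub, hwj, hβj]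
      ring_nf
  rw [e1, e2] at hsq
  have key : ∀ j ∈ T, α ^ 2 * g j ^ 2 ≤ 0 := by
    intro j hj
    have hsplit : ∑ j, α ^ 2 * g j ^ 2
        = ∑ j, ((if j ∈ T then α ^ 2 * g j ^ 2 else 0)
          + (if j ∈ T then 0 else α ^ 2 * g j ^ 2)) := by
      refine Finset.sum_congr rfl fun j _ => ?_
      by_cases hj : j ∈ T <;> simp [hj]
    rw [hsplit, Finset.sum_add_distrib] at hsq
    have hterm : α ^ 2 * g j ^ 2 ≤ ∑ j, (if j ∈ T then α ^ 2 * g j ^ 2 else 0) := by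
      have := Finset.single_le_sum (f := fun j => if j ∈ T then α ^ 2 * g j ^ 2 else 0)
        (fun j _ => by positivity) (Finset.mem_univ j)
      simpa [hj] using this
    linarith
  intro j hj
  have := key j hj
  have hα2 : 0 < α ^ 2 := by positivity
  have hz : g j ^ 2 = 0 := by nlinarith [sq_nonneg (g j)]
  exact pow_eq_zero_iff two_ne_zero |>.mp hz

section ConvexHelper

variable {V : Type*} [AddCommGroup V] [Module ℝ V]

lemma convexOn_finset_sum {ι : Type*} (t : Finset ι) (φ : ι → V → ℝ)
    (h : ∀ i ∈ t, ConvexOn ℝ Set.univ (φ i)) :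
    ConvexOn ℝ Set.univ (fun x => ∑ i ∈ t, φ i x) := by
  classical
  induction t using Finset.induction_on with
  | empty => simpa using convexOn_const (0 : ℝ) convex_univ
  | insert a s hni ih =>
    simp only [Finset.sum_insert hni]
    exact (h a (Finset.mem_insert_self a s)).add
      (ih fun i hi => h i (Finset.mem_insert_of_mem hi))

lemma convexOn_comp_linear (h : ℝ → ℝ) (hh : ConvexOn ℝ Set.univ h) (L : V → ℝ)
    (hL : ∀ (s t : ℝ) (x y : V), L (s • x + t • y) = s * L x + t * L y) :
    ConvexOn ℝ Set.univ (fun x => h (L x)) := by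
  refine ⟨convex_univ, fun x _ y _ s t hs ht hst => ?_⟩
  simp only [smul_eq_mul]
  rw [hL]
  have := hh.2 (Set.mem_univ (L x)) (Set.mem_univ (L y)) hs ht hst
  simpa [smul_eq_mul] using this

lemma convexOn_affine (c d : ℝ) : ConvexOn ℝ Set.univ (fun t : ℝ => c * t + d) := by
  refine ⟨convex_univ, fun x _ y _ s t hs ht hst => ?_⟩
  simp only [smul_eq_mul]
  have : c * (s * x + t * y) + d = s * (c * x + d) + t * (c * y + d) := by
    have : d = (s + t) * d := by rw [hst]; ring
    nlinarith [this]
  rw [this]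

lemma convexOn_log1exp : ConvexOn ℝ Set.univ (fun t : ℝ => Real.log (1 + Real.exp t)) := by
  set g : ℝ → ℝ := fun t => Real.log (1 + Real.exp t) with hg
  have hpos : ∀ t : ℝ, (0 : ℝ) < 1 + Real.exp t := fun t => by positivity
  have hd1 : ∀ t, HasDerivAt g (Real.exp t / (1 + Real.exp t)) t := by
    intro t
    have h1 : HasDerivAt (fun s : ℝ => 1 + Real.exp s) (Real.exp t) t :=
      (Real.hasDerivAt_exp t).const_add 1
    exact h1.log (ne_of_gt (hpos t))
  have hderiv : deriv g = fun t => Real.exp t / (1 + Real.exp t) :=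
    funext fun t => (hd1 t).deriv
  have hd2 : ∀ t, HasDerivAt (fun s => Real.exp s / (1 + Real.exp s))
      (Real.exp t / (1 + Real.exp t) ^ 2) t := by
    intro t
    have h1 := Real.hasDerivAt_exp t
    have h2 : HasDerivAt (fun s : ℝ => 1 + Real.exp s) (Real.exp t) t := h1.const_add 1
    have h3 : HasDerivAt (fun s => Real.exp s / (1 + Real.exp s)) _ t := h1.div h2 (ne_of_gt (hpos t))
    convert h3 using 1
    ring
  refine convexOn_univ_of_deriv2_nonneg (fun t => (hd1 t).differentiableAt) ?_ ?_
  · rw [hderiv]; exact fun t => (hd2 t).differentiableAt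
  · intro t
    have h2 : deriv^[2] g t = deriv (deriv g) t := by
      simp [Function.iterate_succ_apply']
    rw [h2, hderiv, (hd2 t).deriv]
    positivity

lemma convexOn_sq_shift (y : ℝ) : ConvexOn ℝ Set.univ (fun t : ℝ => (y - t) ^ 2) := by
  have h1 : (fun t : ℝ => (y - t) ^ 2) = fun t : ℝ => t ^ 2 + ((-2 * y) * t + y ^ 2) := by
    funext t; ring
  rw [h1]
  exact (Even.convexOn_pow even_two).add (convexOn_affine _ _)

lemma convexOn_logistic_term (y : ℝ) :
    ConvexOn ℝ Set.univ (fun t : ℝ => Real.log (1 + Real.exp t) - y * t) := by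
  have h1 : (fun t : ℝ => Real.log (1 + Real.exp t) - y * t)
      = fun t : ℝ => Real.log (1 + Real.exp t) + ((-y) * t + 0) := by
    funext t; ring
  rw [h1]
  exact convexOn_log1exp.add (convexOn_affine _ _)

end ConvexHelper

/-- first-order lower bound for a convex, strongly smooth function. -/
lemma convex_lower {p : ℕ} {f : EuclideanSpace ℝ (Fin p) → ℝ}
    (hconv : ConvexOn ℝ Set.univ f) {Lf : ℝ} (hLf : 0 < Lf)
    (hsmooth : ∀ β d : EuclideanSpace ℝ (Fin p),
      f (β + d) ≤ f β + ⟪gradient f β, d⟫ + Lf / 2 * ‖d‖ ^ 2)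
    (β d : EuclideanSpace ℝ (Fin p)) :
    f β + ⟪gradient f β, d⟫ ≤ f (β + d) := by
  set g := gradient f β with hgdef
  have key : ∀ t : ℝ, 0 < t → f β + ⟪g, d⟫ - Lf * t / 2 * ‖d‖ ^ 2 ≤ f (β + d) := by
    intro t ht
    have ht1 : (0 : ℝ) < 1 + t := by linarith
    have hpt : (1 / (1 + t)) • (β - t • d) + (t / (1 + t)) • (β + d) = β := by
      match_scalars <;> field_simp <;> ring
    have hcomb := hconv.2 (Set.mem_univ (β - t • d)) (Set.mem_univ (β + d))
      (le_of_lt (by positivity : (0:ℝ) < 1 / (1 + t)))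
      (le_of_lt (by positivity : (0:ℝ) < t / (1 + t))) (by field_simp)
    rw [hpt] at hcomb
    simp only [smul_eq_mul] at hcomb
    have hsm := hsmooth β (-(t • d))
    have he1 : β + -(t • d) = β - t • d := by abel
    have he2 : ⟪g, -(t • d)⟫ = -(t * ⟪g, d⟫) := by
      rw [inner_neg_right, real_inner_smul_right]
    have he3 : ‖-(t • d)‖ ^ 2 = t ^ 2 * ‖d‖ ^ 2 := by
      rw [norm_neg, norm_smul, mul_pow]
      congr 1
      rw [Real.norm_eq_abs, sq_abs]
    rw [he1, ← hgdef, he2, he3] at hsm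
    have hmul := mul_le_mul_of_nonneg_left hcomb (le_of_lt ht1)
    have hexp : (1 + t) * ((1 / (1 + t)) * f (β - t • d) + (t / (1 + t)) * f (β + d))
        = f (β - t • d) + t * f (β + d) := by
      field_simp
    rw [hexp] at hmul
    nlinarith [hmul, hsm]
  by_contra hcon
  push_neg at hcon
  set δ := f β + ⟪g, d⟫ - f (β + d) with hδ
  have hδpos : 0 < δ := by simp only [hδ]; linarith
  set C := Lf / 2 * ‖d‖ ^ 2 with hC
  have hCnn : 0 ≤ C := by positivity
  set t := δ / (C + 1) with htdef
  have htpos : 0 < t := by positivity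
  have := key t htpos
  have hteq : Lf * t / 2 * ‖d‖ ^ 2 = C * t := by rw [hC]; ring
  rw [hteq] at this
  have : δ ≤ C * t := by linarith
  rw [htdef] at this
  have hlt : C * (δ / (C + 1)) < δ := by
    rw [div_eq_mul_inv]
    have h1 : C * (δ * (C + 1)⁻¹) = δ * (C * (C + 1)⁻¹) := by ring
    rw [h1]
    have h2 : C * (C + 1)⁻¹ < 1 := by
      rw [mul_inv_lt_iff₀ (by linarith : (0:ℝ) < C + 1)]
      linarith
    nlinarith
  linarith

/-- merge two blocks into one vector. -/
def mergeVec {p₁ p₂ : ℕ} (u : EuclideanSpace ℝ (Fin p₁)) (v : EuclideanSpace ℝ (Fin p₂)) :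
    EuclideanSpace ℝ (Fin (p₁ + p₂)) :=
  WithLp.toLp 2 (fun i => Fin.addCases (motive := fun _ => ℝ) (fun j => u j) (fun j => v j) i)

@[simp] lemma part1_merge {p₁ p₂ : ℕ} (u : EuclideanSpace ℝ (Fin p₁))
    (v : EuclideanSpace ℝ (Fin p₂)) : part1 (mergeVec u v) = u := by
  ext j; simp [part1, mergeVec]

@[simp] lemma part2_merge {p₁ p₂ : ℕ} (u : EuclideanSpace ℝ (Fin p₁))
    (v : EuclideanSpace ℝ (Fin p₂)) : part2 (mergeVec u v) = v := by
  ext j; simp [part2, mergeVec]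

lemma part1_sub {p₁ p₂ : ℕ} (x y : EuclideanSpace ℝ (Fin (p₁ + p₂))) :
    part1 (x - y) = part1 x - part1 y := by ext i; simp [part1]

lemma part2_sub {p₁ p₂ : ℕ} (x y : EuclideanSpace ℝ (Fin (p₁ + p₂))) :
    part2 (x - y) = part2 x - part2 y := by ext i; simp [part2]

lemma part1_affine {p₁ p₂ : ℕ} (s t : ℝ) (x y : EuclideanSpace ℝ (Fin (p₁ + p₂))) :
    part1 (s • x + t • y) = s • part1 x + t • part1 y := by ext i; simp [part1]

lemma part2_affine {p₁ p₂ : ℕ} (s t : ℝ) (x y : EuclideanSpace ℝ (Fin (p₁ + p₂))) :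
    part2 (s • x + t • y) = s • part2 x + t • part2 y := by ext i; simp [part2]

/-- inner products split across blocks. -/
lemma inner_split {p₁ p₂ : ℕ} (x y : EuclideanSpace ℝ (Fin (p₁ + p₂))) :
    ⟪x, y⟫ = ⟪part1 x, part1 y⟫ + ⟪part2 x, part2 y⟫ := by
  rw [inner_eq'', inner_eq'', inner_eq'', Fin.sum_univ_add]
  simp [part1, part2]

lemma normsq_split {p₁ p₂ : ℕ} (x : EuclideanSpace ℝ (Fin (p₁ + p₂))) :
    ‖x‖ ^ 2 = ‖part1 x‖ ^ 2 + ‖part2 x‖ ^ 2 := by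
  rw [← real_inner_self_eq_norm_sq, ← real_inner_self_eq_norm_sq, ← real_inner_self_eq_norm_sq]
  exact inner_split x x

lemma mulVec_part1_affine {n p₁ p₂ : ℕ} (X : Matrix (Fin n) (Fin p₁) ℝ) (i : Fin n)
    (s t : ℝ) (x y : EuclideanSpace ℝ (Fin (p₁ + p₂))) :
    X.mulVec (part1 (s • x + t • y)) i
      = s * X.mulVec (part1 x) i + t * X.mulVec (part1 y) i := by
  rw [part1_affine]
  simp only [Matrix.mulVec, dotProduct, PiLp.add_apply, PiLp.smul_apply, smul_eq_mul,
    Finset.mul_sum, mul_add, ← Finset.sum_add_distrib]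
  exact Finset.sum_congr rfl fun j _ => by ring

lemma mulVec_part2_affine {n p₁ p₂ : ℕ} (Z : Matrix (Fin n) (Fin p₂) ℝ) (i : Fin n)
    (s t : ℝ) (x y : EuclideanSpace ℝ (Fin (p₁ + p₂))) :
    Z.mulVec (part2 (s • x + t • y)) i
      = s * Z.mulVec (part2 x) i + t * Z.mulVec (part2 y) i := by
  rw [part2_affine]
  simp only [Matrix.mulVec, dotProduct, PiLp.add_apply, PiLp.smul_apply, smul_eq_mul,
    Finset.mul_sum, mul_add, ← Finset.sum_add_distrib]
  exact Finset.sum_congr rfl fun j _ => by ring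

/-- the SCL objective is convex (for both admissible losses). -/
lemma convexOn_sclObj {n p₁ p₂ : ℕ}
    (X : Matrix (Fin n) (Fin p₁) ℝ) (Z : Matrix (Fin n) (Fin p₂) ℝ) (y : Fin n → ℝ)
    {a b c : ℝ} (ha : 0 ≤ a) (hb : 0 ≤ b) (hc : 0 ≤ c)
    (ℓ₁ : Matrix (Fin n) (Fin p₁) ℝ → (Fin n → ℝ) → EuclideanSpace ℝ (Fin p₁) → ℝ)
    (ℓ₂ : Matrix (Fin n) (Fin p₂) ℝ → (Fin n → ℝ) → EuclideanSpace ℝ (Fin p₂) → ℝ)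
    (hℓ : (ℓ₁ = ellLog ∧ ℓ₂ = ellLog) ∨ (ℓ₁ = ellLin ∧ ℓ₂ = ellLin)) :
    ConvexOn ℝ Set.univ (sclObj ℓ₁ ℓ₂ X Z y a b c) := by
  have hA : ConvexOn ℝ Set.univ
      (fun β : EuclideanSpace ℝ (Fin (p₁ + p₂)) => ℓ₁ X y (part1 β)) := by
    rcases hℓ with ⟨h1, _⟩ | ⟨h1, _⟩ <;> subst h1
    · exact convexOn_finset_sum Finset.univ
        (fun i β => Real.log (1 + Real.exp (X.mulVec (part1 β) i)) - y i * X.mulVec (part1 β) i)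
        (fun i _ => convexOn_comp_linear _ (convexOn_logistic_term (y i))
          (fun β => X.mulVec (part1 β) i) (mulVec_part1_affine X i))
    · have h := (convexOn_finset_sum Finset.univ
        (fun i (β : EuclideanSpace ℝ (Fin (p₁ + p₂))) => (y i - X.mulVec (part1 β) i) ^ 2)
        (fun i _ => convexOn_comp_linear _ (convexOn_sq_shift (y i))
          (fun β => X.mulVec (part1 β) i) (mulVec_part1_affine X i))).smul
          (by norm_num : (0:ℝ) ≤ 1/2)
      have he : (fun β : EuclideanSpace ℝ (Fin (p₁ + p₂)) => ellLin X y (part1 β))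
          = fun β => (1/2 : ℝ) • ∑ i, (y i - X.mulVec (part1 β) i) ^ 2 := by
        funext β; simp [ellLin, smul_eq_mul]
      rw [he]; exact h
  have hB : ConvexOn ℝ Set.univ
      (fun β : EuclideanSpace ℝ (Fin (p₁ + p₂)) => ℓ₂ Z y (part2 β)) := by
    rcases hℓ with ⟨_, h2⟩ | ⟨_, h2⟩ <;> subst h2
    · exact convexOn_finset_sum Finset.univ
        (fun i β => Real.log (1 + Real.exp (Z.mulVec (part2 β) i)) - y i * Z.mulVec (part2 β) i)
        (fun i _ => convexOn_comp_linear _ (convexOn_logistic_term (y i))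
          (fun β => Z.mulVec (part2 β) i) (mulVec_part2_affine Z i))
    · have h := (convexOn_finset_sum Finset.univ
        (fun i (β : EuclideanSpace ℝ (Fin (p₁ + p₂))) => (y i - Z.mulVec (part2 β) i) ^ 2)
        (fun i _ => convexOn_comp_linear _ (convexOn_sq_shift (y i))
          (fun β => Z.mulVec (part2 β) i) (mulVec_part2_affine Z i))).smul
          (by norm_num : (0:ℝ) ≤ 1/2)
      have he : (fun β : EuclideanSpace ℝ (Fin (p₁ + p₂)) => ellLin Z y (part2 β))
          = fun β => (1/2 : ℝ) • ∑ i, (y i - Z.mulVec (part2 β) i) ^ 2 := by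
        funext β; simp [ellLin, smul_eq_mul]
      rw [he]; exact h
  have hC : ConvexOn ℝ Set.univ
      (fun β : EuclideanSpace ℝ (Fin (p₁ + p₂)) =>
        ∑ i, (X.mulVec (part1 β) i - Z.mulVec (part2 β) i) ^ 2) := by
    refine convexOn_finset_sum Finset.univ _ (fun i _ => ?_)
    refine convexOn_comp_linear _ (Even.convexOn_pow even_two)
      (fun β => X.mulVec (part1 β) i - Z.mulVec (part2 β) i) (fun s t x y' => ?_)
    simp only []
    rw [mulVec_part1_affine, mulVec_part2_affine]; ring
  have hS := (((hA.smul ha).add ((hB.smul hb).add (hC.smul (by positivity : (0:ℝ) ≤ c/2)))).smul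
    (by positivity : (0:ℝ) ≤ 1 / (n : ℝ)))
  have he : sclObj ℓ₁ ℓ₂ X Z y a b c
      = fun β => (1 / (n:ℝ)) • (a • ℓ₁ X y (part1 β) + (b • ℓ₂ Z y (part2 β)
        + (c/2) • ∑ i, (X.mulVec (part1 β) i - Z.mulVec (part2 β) i) ^ 2)) := by
    funext β; simp only [sclObj, smul_eq_mul]; ring
  rw [he]; exact hS

/-- per-block argument for local minimality: the inner product of the gradient block with the
difference of nearby feasible points vanishes. -/
lemma block_inner_zero {q s : ℕ} {α : ℝ} (hα : 0 < α)
    {βq gq xq : EuclideanSpace ℝ (Fin q)}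
    (hstat : βq ∈ projSet {v | zeroNorm v ≤ s} (βq - α • gq))
    (hxs : zeroNorm xq ≤ s)
    (hclose : ∀ i, βq i ≠ 0 → |xq i - βq i| < |βq i|) :
    ⟪gq, xq - βq⟫ = 0 := by
  classical
  set T : Finset (Fin q) := Finset.univ.filter (fun j => βq j ≠ 0) with hTdef
  have hTcard : T.card ≤ s := by
    rw [hTdef, ← zeroNorm_eq_card]; exact hstat.1
  have hgT : ∀ j ∈ T, gq j = 0 :=
    grad_zero_on hα hstat T (fun j hj => by simp [hTdef, hj]) hTcard
  rw [inner_eq'']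
  refine Finset.sum_eq_zero fun j _ => ?_
  have hsub : (xq - βq) j = xq j - βq j := rfl
  by_cases hβj : βq j = 0
  · by_cases hlt : zeroNorm βq < s
    · have hz : gq j = 0 := by
        refine grad_zero_on hα hstat (insert j T)
          (fun j' hj' => Finset.mem_insert_of_mem (by simp [hTdef, hj'])) ?_ j
          (Finset.mem_insert_self _ _)
        have h1 : (insert j T).card ≤ T.card + 1 := Finset.card_insert_le _ _
        have h2 : zeroNorm βq = T.card := by rw [hTdef, zeroNorm_eq_card]
        omega
      simp [hz]
    · -- `zeroNorm βq = s`; then nearby feasible points have the same support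
      set U : Finset (Fin q) := Finset.univ.filter (fun j => xq j ≠ 0) with hUdef
      have hUcard : U.card ≤ s := by rw [hUdef, ← zeroNorm_eq_card]; exact hxs
      have hsubTU : T ⊆ U := by
        intro i hi
        simp only [hTdef, Finset.mem_filter, Finset.mem_univ, true_and] at hi
        simp only [hUdef, Finset.mem_filter, Finset.mem_univ, true_and]
        intro hxi0
        have := hclose i hi
        rw [hxi0] at this
        simp at this
      have hTs : s ≤ T.card := by
        have h2 : zeroNorm βq = T.card := by rw [hTdef, zeroNorm_eq_card]
        omega
      have hTU : T = U := Finset.eq_of_subset_of_card_le hsubTU (by omega)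
      have hjU : j ∉ U := by
        rw [← hTU]
        simp [hTdef, hβj]
      have hxj : xq j = 0 := by
        by_contra h
        exact hjU (by simp [hUdef, h])
      rw [hsub, hxj, hβj]
      ring
  · have := hgT j (by simp [hTdef, hβj])
    rw [this]; ring

/-- per-block argument for global minimality under strict sparsity: the gradient block vanishes. -/
lemma block_grad_zero {q s : ℕ} {α : ℝ} (hα : 0 < α)
    {βq gq : EuclideanSpace ℝ (Fin q)}
    (hstat : βq ∈ projSet {v | zeroNorm v ≤ s} (βq - α • gq))
    (hlt : zeroNorm βq < s) : ∀ j, gq j = 0 := by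
  classical
  intro j
  set T : Finset (Fin q) := Finset.univ.filter (fun j => βq j ≠ 0) with hTdef
  refine grad_zero_on hα hstat (insert j T)
    (fun j' hj' => Finset.mem_insert_of_mem (by simp [hTdef, hj'])) ?_ j
    (Finset.mem_insert_self _ _)
  have h1 : (insert j T).card ≤ T.card + 1 := Finset.card_insert_le _ _
  have h2 : zeroNorm βq = T.card := by rw [hTdef, zeroNorm_eq_card]
  omega

end Helpers

set_option maxHeartbeats 2000000 in
/-- for `ℓ ∈ {ℓ_log, ℓ_lin}` with strong smoothness parameter `L_f`:
(i) every `α`-stationary point (`α > 0`) is a local minimizer;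
(ii) if moreover `‖β₁*‖₀ < s₁` and `‖β₂*‖₀ < s₂`, it is a global minimizer;
(iii) every global minimizer is an `α`-stationary point for each `0 < α < 1/L_f`. -/
theorem scl_stationary_vs_minimizers {n p₁ p₂ : ℕ} (hn : 0 < n)
    (X : Matrix (Fin n) (Fin p₁) ℝ) (Z : Matrix (Fin n) (Fin p₂) ℝ) (y : Fin n → ℝ)
    (s₁ s₂ : ℕ) (hs₁ : 0 < s₁) (hs₁p : s₁ < p₁) (hs₂ : 0 < s₂) (hs₂p : s₂ < p₂)
    (a b c : ℝ) (ha : 0 < a) (hb : 0 < b) (hc : 0 < c)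
    (ℓ₁ : Matrix (Fin n) (Fin p₁) ℝ → (Fin n → ℝ) → EuclideanSpace ℝ (Fin p₁) → ℝ)
    (ℓ₂ : Matrix (Fin n) (Fin p₂) ℝ → (Fin n → ℝ) → EuclideanSpace ℝ (Fin p₂) → ℝ)
    (hℓ : (ℓ₁ = ellLog ∧ ℓ₂ = ellLog) ∨ (ℓ₁ = ellLin ∧ ℓ₂ = ellLin))
    (f : EuclideanSpace ℝ (Fin (p₁ + p₂)) → ℝ)
    (hf : f = sclObj ℓ₁ ℓ₂ X Z y a b c)
    (Lf : ℝ) (hLfpos : 0 < Lf)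
    (hsmooth : ∀ β d : EuclideanSpace ℝ (Fin (p₁ + p₂)),
      f (β + d) ≤ f β + ⟪gradient f β, d⟫ + Lf / 2 * ‖d‖ ^ 2) :
    (∀ (βs : EuclideanSpace ℝ (Fin (p₁ + p₂))) (α : ℝ), 0 < α →
      alphaStat f s₁ s₂ α βs → IsLocalMinOn f (feas p₁ p₂ s₁ s₂) βs) ∧
    (∀ (βs : EuclideanSpace ℝ (Fin (p₁ + p₂))) (α : ℝ), 0 < α →
      alphaStat f s₁ s₂ α βs →
      zeroNorm (part1 βs) < s₁ → zeroNorm (part2 βs) < s₂ →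
      ∀ β ∈ feas p₁ p₂ s₁ s₂, f βs ≤ f β) ∧
    (∀ βs ∈ feas p₁ p₂ s₁ s₂, (∀ β ∈ feas p₁ p₂ s₁ s₂, f βs ≤ f β) →
      ∀ α : ℝ, 0 < α → α < 1 / Lf → alphaStat f s₁ s₂ α βs) := by
  classical
  have hconv : ConvexOn ℝ Set.univ f := by
    rw [hf]; exact convexOn_sclObj X Z y ha.le hb.le hc.le ℓ₁ ℓ₂ hℓ
  have hlower := convex_lower hconv hLfpos hsmooth
  haveI hne : Nonempty (Fin (p₁ + p₂)) := ⟨⟨0, by omega⟩⟩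
  refine ⟨?_, ?_, ?_⟩
  · -- (i) α-stationary ⇒ local minimizer
    intro βs α hα hstat
    set h : Fin (p₁ + p₂) → ℝ := fun i => if βs i = 0 then 1 else |βs i| with hhdef
    set ε : ℝ := Finset.univ.inf' Finset.univ_nonempty h with hεdef
    have hεpos : 0 < ε := by
      rw [hεdef, Finset.lt_inf'_iff]
      intro i _
      by_cases hb0 : βs i = 0 <;> simp [hhdef, hb0, abs_pos]
    have hεle : ∀ i : Fin (p₁ + p₂), βs i ≠ 0 → ε ≤ |βs i| := by
      intro i hi
      have := Finset.inf'_le (b := i) h (Finset.mem_univ i)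
      rw [← hεdef] at this
      simpa [hhdef, hi] using this
    have hball : Metric.ball βs ε ∈ 𝓝 βs := Metric.ball_mem_nhds _ hεpos
    show IsMinFilter f (𝓝[feas p₁ p₂ s₁ s₂] βs) βs
    filter_upwards [self_mem_nhdsWithin, mem_nhdsWithin_of_mem_nhds hball] with x hxfeas hxball
    have hxdist : ‖x - βs‖ < ε := by
      rw [← dist_eq_norm]
      exact Metric.mem_ball.mp hxball
    have hclose : ∀ i : Fin (p₁ + p₂), βs i ≠ 0 → |x i - βs i| < |βs i| := by
      intro i hi
      have h1 : |x i - βs i| = |(x - βs) i| := rfl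
      have h2 := abs_coord_le (x - βs) i
      have h3 := hεle i hi
      rw [h1]
      linarith
    have hz1 : ⟪part1 (gradient f βs), part1 x - part1 βs⟫ = 0 := by
      refine block_inner_zero hα hstat.1 hxfeas.1 (fun i hi => ?_)
      simpa [part1] using hclose (Fin.castAdd p₂ i) (by simpa [part1] using hi)
    have hz2 : ⟪part2 (gradient f βs), part2 x - part2 βs⟫ = 0 := by
      refine block_inner_zero hα hstat.2 hxfeas.2 (fun i hi => ?_)
      simpa [part2] using hclose (Fin.natAdd p₁ i) (by simpa [part2] using hi)
    have hz : ⟪gradient f βs, x - βs⟫ = 0 := by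
      rw [inner_split, part1_sub, part2_sub, hz1, hz2, add_zero]
    have hkey := hlower βs (x - βs)
    rw [add_sub_cancel, hz] at hkey
    linarith
  · -- (ii) strict sparsity ⇒ global minimizer
    intro βs α hα hstat hlt1 hlt2 β hβ
    have hg1 := block_grad_zero hα hstat.1 hlt1
    have hg2 := block_grad_zero hα hstat.2 hlt2
    have hz : ⟪gradient f βs, β - βs⟫ = 0 := by
      rw [inner_split, part1_sub, part2_sub, inner_eq'', inner_eq'']
      rw [Finset.sum_eq_zero fun j _ => by rw [hg1 j]; ring,
        Finset.sum_eq_zero fun j _ => by rw [hg2 j]; ring, add_zero]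
    have hkey := hlower βs (β - βs)
    rw [add_sub_cancel, hz] at hkey
    linarith
  · -- (iii) global minimizer ⇒ α-stationary for 0 < α < 1/Lf
    intro βs hβs hmin α hα hαLf
    have hαLf' : α * Lf < 1 := by
      rw [lt_div_iff₀ hLfpos] at hαLf
      exact hαLf
    constructor
    · refine ⟨hβs.1, fun v hv => le_of_not_gt fun hlt => ?_⟩
      set g1 := part1 (gradient f βs) with hg1def
      have hsubw : part1 βs - (part1 βs - α • g1) = α • g1 := by abel
      have hsq : ‖v - (part1 βs - α • g1)‖ ^ 2 < ‖α • g1‖ ^ 2 := by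
        have h' := pow_lt_pow_left₀ hlt (norm_nonneg _) two_ne_zero
        rwa [hsubw] at h'
      have hexpand : v - (part1 βs - α • g1) = (v - part1 βs) + α • g1 := by abel
      rw [hexpand, norm_add_sq_real, real_inner_smul_right] at hsq
      have hnormpos : 0 < ‖v - part1 βs‖ := by
        rcases eq_or_ne v (part1 βs) with hvb | hvb
        · rw [hvb] at hlt; exact absurd hlt (lt_irrefl _)
        · rw [norm_sub_pos_iff]; exact hvb
      set β' := mergeVec v (part2 βs) with hβ'def
      have hd1 : part1 (β' - βs) = v - part1 βs := by rw [part1_sub, hβ'def, part1_merge]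
      have hd2 : part2 (β' - βs) = 0 := by rw [part2_sub, hβ'def, part2_merge, sub_self]
      have hsm := hsmooth βs (β' - βs)
      rw [add_sub_cancel] at hsm
      have hip : ⟪gradient f βs, β' - βs⟫ = ⟪v - part1 βs, g1⟫ := by
        rw [inner_split, hd1, hd2, inner_zero_right, add_zero, ← hg1def, real_inner_comm]
      have hnorm : ‖β' - βs‖ ^ 2 = ‖v - part1 βs‖ ^ 2 := by
        rw [normsq_split, hd1, hd2, norm_zero]
        ring
      rw [hip, hnorm] at hsm
      have hfeas' : β' ∈ feas p₁ p₂ s₁ s₂ := by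
        refine ⟨?_, ?_⟩
        · rw [hβ'def, part1_merge]; exact hv
        · rw [hβ'def, part2_merge]; exact hβs.2
      have hmin' := hmin β' hfeas'
      -- combine
      have hI : 2 * (α * ⟪v - part1 βs, g1⟫) < -‖v - part1 βs‖ ^ 2 := by nlinarith [hsq]
      have h0 : 0 ≤ ⟪v - part1 βs, g1⟫ + Lf / 2 * ‖v - part1 βs‖ ^ 2 := by linarith
      nlinarith [mul_le_mul_of_nonneg_left h0 (le_of_lt (by linarith : (0:ℝ) < 2 * α)),
        mul_lt_mul_of_pos_right hαLf' (by positivity : (0:ℝ) < ‖v - part1 βs‖ ^ 2)]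
    · refine ⟨hβs.2, fun v hv => le_of_not_gt fun hlt => ?_⟩
      set g2 := part2 (gradient f βs) with hg2def
      have hsubw : part2 βs - (part2 βs - α • g2) = α • g2 := by abel
      have hsq : ‖v - (part2 βs - α • g2)‖ ^ 2 < ‖α • g2‖ ^ 2 := by
        have h' := pow_lt_pow_left₀ hlt (norm_nonneg _) two_ne_zero
        rwa [hsubw] at h'
      have hexpand : v - (part2 βs - α • g2) = (v - part2 βs) + α • g2 := by abel
      rw [hexpand, norm_add_sq_real, real_inner_smul_right] at hsq
      have hnormpos : 0 < ‖v - part2 βs‖ := by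
        rcases eq_or_ne v (part2 βs) with hvb | hvb
        · rw [hvb] at hlt; exact absurd hlt (lt_irrefl _)
        · rw [norm_sub_pos_iff]; exact hvb
      set β' := mergeVec (part1 βs) v with hβ'def
      have hd1 : part1 (β' - βs) = 0 := by rw [part1_sub, hβ'def, part1_merge, sub_self]
      have hd2 : part2 (β' - βs) = v - part2 βs := by rw [part2_sub, hβ'def, part2_merge]
      have hsm := hsmooth βs (β' - βs)
      rw [add_sub_cancel] at hsm
      have hip : ⟪gradient f βs, β' - βs⟫ = ⟪v - part2 βs, g2⟫ := by
        rw [inner_split, hd1, hd2, inner_zero_right, zero_add, ← hg2def, real_inner_comm]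
      have hnorm : ‖β' - βs‖ ^ 2 = ‖v - part2 βs‖ ^ 2 := by
        rw [normsq_split, hd1, hd2, norm_zero]
        ring
      rw [hip, hnorm] at hsm
      have hfeas' : β' ∈ feas p₁ p₂ s₁ s₂ := by
        refine ⟨?_, ?_⟩
        · rw [hβ'def, part1_merge]; exact hβs.1
        · rw [hβ'def, part2_merge]; exact hv
      have hmin' := hmin β' hfeas'
      have hI : 2 * (α * ⟪v - part2 βs, g2⟫) < -‖v - part2 βs‖ ^ 2 := by nlinarith [hsq]
      have h0 : 0 ≤ ⟪v - part2 βs, g2⟫ + Lf / 2 * ‖v - part2 βs‖ ^ 2 := by linarith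
      nlinarith [mul_le_mul_of_nonneg_left h0 (le_of_lt (by linarith : (0:ℝ) < 2 * α)),
        mul_lt_mul_of_pos_right hαLf' (by positivity : (0:ℝ) < ‖v - part2 βs‖ ^ 2)]
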